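/- Let V, W, X be finite-dimensional complex vector spaces and f ∈ End(V), g ∈ End(W), h ∈ End(X). Define φ_{f,g} = exp(−(1/2) f² ⊗ g) ∈ End(V ⊗ W), and analogously φ_{g,h} ∈ End(W ⊗ X), φ_{f, g ⊞ h} = exp(−(1/2) f² ⊗ (g ⊞ h)) and φ_{f ⊞ g, h} = exp(−(1/2) (f ⊞ g)² ⊗ h) in End(V ⊗ W ⊗ X). Then (1_V ⊗ φ_{g,h}) ∘ φ_{f, g ⊞ h} ∘ φ_{f ⊞ g, h}^{−1} ∘ (φ_{f,g}^{−1} ⊗ 1_X) = exp(f ⊗ g ⊗ h) in End(V ⊗ W ⊗ X). -/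

import Mathlib

/-!
Statement 15: the exotic associator `ω_{f,g,h} = exp(f ⊗ g ⊗ h)` is a coboundary:
`(1_V ⊗ φ_{g,h}) ∘ φ_{f, g ⊞ h} ∘ φ_{f ⊞ g, h}⁻¹ ∘ (φ_{f,g}⁻¹ ⊗ 1_X) = exp(f ⊗ g ⊗ h)`,
where `φ_{f,g} = exp(−(1/2) f² ⊗ g)` and `f ⊞ g = f ⊗ 1 + 1 ⊗ g`.
Endomorphisms of finite-dimensional complex vector spaces are represented by complex matrices,
tensor products by Kronecker products, and the canonical associativity identification by
`Matrix.reindex` along `Equiv.prodAssoc`.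
-/

open Matrix Kronecker

variable {m n p : Type*} [Fintype m] [Fintype n] [Fintype p]
  [DecidableEq m] [DecidableEq n] [DecidableEq p]

open NormedSpace in
/-- `exp` commutes with left Kronecker product by the identity. -/
private theorem exp_one_kronecker' {a b : Type*} [Fintype a] [Fintype b]
    [DecidableEq a] [DecidableEq b] (A : Matrix b b ℂ) :
    (1 : Matrix a a ℂ) ⊗ₖ exp A = exp ((1 : Matrix a a ℂ) ⊗ₖ A) := by
  letI : SeminormedRing (Matrix b b ℂ) := Matrix.linftyOpSemiNormedRing
  letI : NormedRing (Matrix b b ℂ) := Matrix.linftyOpNormedRing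
  letI : NormedAlgebra ℂ (Matrix b b ℂ) := Matrix.linftyOpNormedAlgebra
  letI : NormedAlgebra ℚ (Matrix b b ℂ) := Matrix.linftyOpNormedAlgebra
  letI : SeminormedRing (Matrix (a × b) (a × b) ℂ) := Matrix.linftyOpSemiNormedRing
  letI : NormedRing (Matrix (a × b) (a × b) ℂ) := Matrix.linftyOpNormedRing
  letI : NormedAlgebra ℂ (Matrix (a × b) (a × b) ℂ) := Matrix.linftyOpNormedAlgebra
  let F : Matrix b b ℂ →ₐ[ℂ] Matrix (a × b) (a × b) ℂ :=
    { toFun := fun X => (1 : Matrix a a ℂ) ⊗ₖ X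
      map_one' := Matrix.one_kronecker_one
      map_mul' := fun X Y => by rw [← Matrix.mul_kronecker_mul, one_mul]
      map_zero' := Matrix.kronecker_zero _
      map_add' := fun X Y => Matrix.kronecker_add _ _ _
      commutes' := fun r => by
        simp only [Algebra.algebraMap_eq_smul_one, Matrix.kronecker_smul,
          Matrix.one_kronecker_one] }
  exact map_exp F F.toLinearMap.continuous_of_finiteDimensional A

open NormedSpace in
/-- `exp` commutes with right Kronecker product by the identity. -/
private theorem exp_kronecker_one' {a b : Type*} [Fintype a] [Fintype b]
    [DecidableEq a] [DecidableEq b] (A : Matrix a a ℂ) :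
    exp A ⊗ₖ (1 : Matrix b b ℂ) = exp (A ⊗ₖ (1 : Matrix b b ℂ)) := by
  letI : SeminormedRing (Matrix a a ℂ) := Matrix.linftyOpSemiNormedRing
  letI : NormedRing (Matrix a a ℂ) := Matrix.linftyOpNormedRing
  letI : NormedAlgebra ℂ (Matrix a a ℂ) := Matrix.linftyOpNormedAlgebra
  letI : NormedAlgebra ℚ (Matrix a a ℂ) := Matrix.linftyOpNormedAlgebra
  letI : SeminormedRing (Matrix (a × b) (a × b) ℂ) := Matrix.linftyOpSemiNormedRing
  letI : NormedRing (Matrix (a × b) (a × b) ℂ) := Matrix.linftyOpNormedRing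
  letI : NormedAlgebra ℂ (Matrix (a × b) (a × b) ℂ) := Matrix.linftyOpNormedAlgebra
  let F : Matrix a a ℂ →ₐ[ℂ] Matrix (a × b) (a × b) ℂ :=
    { toFun := fun X => X ⊗ₖ (1 : Matrix b b ℂ)
      map_one' := Matrix.one_kronecker_one
      map_mul' := fun X Y => by rw [← Matrix.mul_kronecker_mul, one_mul]
      map_zero' := Matrix.zero_kronecker _
      map_add' := fun X Y => Matrix.add_kronecker _ _ _
      commutes' := fun r => by
        simp only [Algebra.algebraMap_eq_smul_one, Matrix.smul_kronecker,
          Matrix.one_kronecker_one] }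
  exact map_exp F F.toLinearMap.continuous_of_finiteDimensional A

open NormedSpace in
/-- `exp` commutes with reindexing. -/
private theorem exp_reindex' {a b : Type*} [Fintype a] [Fintype b]
    [DecidableEq a] [DecidableEq b] (e : a ≃ b) (A : Matrix a a ℂ) :
    Matrix.reindex e e (exp A) = exp (Matrix.reindex e e A) := by
  letI : SeminormedRing (Matrix a a ℂ) := Matrix.linftyOpSemiNormedRing
  letI : NormedRing (Matrix a a ℂ) := Matrix.linftyOpNormedRing
  letI : NormedAlgebra ℂ (Matrix a a ℂ) := Matrix.linftyOpNormedAlgebra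
  letI : NormedAlgebra ℚ (Matrix a a ℂ) := Matrix.linftyOpNormedAlgebra
  letI : SeminormedRing (Matrix b b ℂ) := Matrix.linftyOpSemiNormedRing
  letI : NormedRing (Matrix b b ℂ) := Matrix.linftyOpNormedRing
  letI : NormedAlgebra ℂ (Matrix b b ℂ) := Matrix.linftyOpNormedAlgebra
  let F : Matrix a a ℂ →ₐ[ℂ] Matrix b b ℂ := (Matrix.reindexAlgEquiv ℂ ℂ e).toAlgHom
  exact map_exp F F.toLinearMap.continuous_of_finiteDimensional A

/-- Kronecker products of commuting pairs commute. -/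
private theorem commute_kronecker {a b : Type*} [Fintype a] [Fintype b]
    {A A' : Matrix a a ℂ} {B B' : Matrix b b ℂ}
    (hA : Commute A A') (hB : Commute B B') : Commute (A ⊗ₖ B) (A' ⊗ₖ B') := by
  unfold Commute SemiconjBy
  rw [← Matrix.mul_kronecker_mul, ← Matrix.mul_kronecker_mul, hA.eq, hB.eq]

private theorem commute_combo {A : Type*} [Ring A] [Module ℂ A]
    [SMulCommClass ℂ A A] [IsScalarTower ℂ A A]
    {P Q R S : A} (hPQ : Commute P Q) (hPR : Commute P R) (hPS : Commute P S)
    (hQR : Commute Q R) (hQS : Commute Q S) (hRS : Commute R S)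
    (a b c d a' b' c' d' : ℂ) :
    Commute (a • P + b • Q + c • R + d • S) (a' • P + b' • Q + c' • R + d' • S) := by
  have hP : Commute P (a' • P + b' • Q + c' • R + d' • S) :=
    ((((Commute.refl P).smul_right a').add_right (hPQ.smul_right b')).add_right
      (hPR.smul_right c')).add_right (hPS.smul_right d')
  have hQ : Commute Q (a' • P + b' • Q + c' • R + d' • S) :=
    (((hPQ.symm.smul_right a').add_right ((Commute.refl Q).smul_right b')).add_right
      (hQR.smul_right c')).add_right (hQS.smul_right d')
  have hR : Commute R (a' • P + b' • Q + c' • R + d' • S) :=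
    (((hPR.symm.smul_right a').add_right (hQR.symm.smul_right b')).add_right
      ((Commute.refl R).smul_right c')).add_right (hRS.smul_right d')
  have hS : Commute S (a' • P + b' • Q + c' • R + d' • S) :=
    (((hPS.symm.smul_right a').add_right (hQS.symm.smul_right b')).add_right
      (hRS.symm.smul_right c')).add_right ((Commute.refl S).smul_right d')
  exact (((hP.smul_left a).add_left (hQ.smul_left b)).add_left
    (hR.smul_left c)).add_left (hS.smul_left d)

theorem exp_associator_coboundary
    (f : Matrix m m ℂ) (g : Matrix n n ℂ) (h : Matrix p p ℂ) :
    -- (1_V ⊗ φ_{g,h}) ∘ φ_{f, g ⊞ h} ∘ (φ_{f ⊞ g, h})⁻¹ ∘ (φ_{f,g}⁻¹ ⊗ 1_X)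
    ((1 : Matrix m m ℂ) ⊗ₖ NormedSpace.exp ((-(1/2 : ℂ)) • ((g * g) ⊗ₖ h)))
      * NormedSpace.exp
          ((-(1/2 : ℂ)) • ((f * f) ⊗ₖ (g ⊗ₖ (1 : Matrix p p ℂ) + (1 : Matrix n n ℂ) ⊗ₖ h)))
      * (Matrix.reindex (Equiv.prodAssoc m n p) (Equiv.prodAssoc m n p)
          (NormedSpace.exp ((-(1/2 : ℂ)) •
            (((f ⊗ₖ (1 : Matrix n n ℂ) + (1 : Matrix m m ℂ) ⊗ₖ g)
              * (f ⊗ₖ (1 : Matrix n n ℂ) + (1 : Matrix m m ℂ) ⊗ₖ g)) ⊗ₖ h))))⁻¹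
      * Matrix.reindex (Equiv.prodAssoc m n p) (Equiv.prodAssoc m n p)
          ((NormedSpace.exp ((-(1/2 : ℂ)) • ((f * f) ⊗ₖ g)))⁻¹ ⊗ₖ (1 : Matrix p p ℂ))
    = NormedSpace.exp (f ⊗ₖ (g ⊗ₖ h)) := by
  -- the four basic commuting matrices
  set P : Matrix (m × (n × p)) (m × (n × p)) ℂ := (f * f) ⊗ₖ (g ⊗ₖ (1 : Matrix p p ℂ)) with hPdef
  set Q : Matrix (m × (n × p)) (m × (n × p)) ℂ := (f * f) ⊗ₖ ((1 : Matrix n n ℂ) ⊗ₖ h) with hQdef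
  set R : Matrix (m × (n × p)) (m × (n × p)) ℂ :=
    (1 : Matrix m m ℂ) ⊗ₖ ((g * g) ⊗ₖ h) with hRdef
  set S : Matrix (m × (n × p)) (m × (n × p)) ℂ := f ⊗ₖ (g ⊗ₖ h) with hSdef
  have hPQ : Commute P Q := commute_kronecker (Commute.refl _)
    (commute_kronecker (Commute.one_right g) (Commute.one_left h))
  have hPR : Commute P R := commute_kronecker (Commute.one_right _)
    (commute_kronecker ((Commute.refl g).mul_right (Commute.refl g)) (Commute.one_left h))
  have hPS : Commute P S := commute_kronecker ((Commute.refl f).mul_left (Commute.refl f))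
    (commute_kronecker (Commute.refl g) (Commute.one_left h))
  have hQR : Commute Q R := commute_kronecker (Commute.one_right _)
    (commute_kronecker (Commute.one_left _) (Commute.refl h))
  have hQS : Commute Q S := commute_kronecker ((Commute.refl f).mul_left (Commute.refl f))
    (commute_kronecker (Commute.one_left g) (Commute.refl h))
  have hRS : Commute R S := commute_kronecker (Commute.one_left f)
    (commute_kronecker ((Commute.refl g).mul_left (Commute.refl g)) (Commute.refl h))
  -- rewrite all four factors as exponentials
  rw [← Matrix.exp_neg, exp_reindex', ← Matrix.exp_neg, exp_one_kronecker',
    exp_kronecker_one', exp_reindex']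
  -- canonical forms of the four exponents
  have hA1 : (1 : Matrix m m ℂ) ⊗ₖ ((-(1/2 : ℂ)) • ((g * g) ⊗ₖ h))
      = (0:ℂ) • P + (0:ℂ) • Q + (-(1/2 : ℂ)) • R + (0:ℂ) • S := by
    rw [Matrix.kronecker_smul, ← hRdef]
    module
  have hA2 : (-(1/2 : ℂ)) • ((f * f) ⊗ₖ (g ⊗ₖ (1 : Matrix p p ℂ) + (1 : Matrix n n ℂ) ⊗ₖ h))
      = (-(1/2 : ℂ)) • P + (-(1/2 : ℂ)) • Q + (0:ℂ) • R + (0:ℂ) • S := by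
    rw [Matrix.kronecker_add, ← hPdef, ← hQdef]
    module
  have hsq : (f ⊗ₖ (1 : Matrix n n ℂ) + (1 : Matrix m m ℂ) ⊗ₖ g)
        * (f ⊗ₖ (1 : Matrix n n ℂ) + (1 : Matrix m m ℂ) ⊗ₖ g)
      = (f * f) ⊗ₖ (1 : Matrix n n ℂ) + f ⊗ₖ g + f ⊗ₖ g
        + (1 : Matrix m m ℂ) ⊗ₖ (g * g) := by
    simp only [add_mul, mul_add, ← Matrix.mul_kronecker_mul, one_mul, mul_one]
    abel
  have hA3 : -(Matrix.reindex (Equiv.prodAssoc m n p) (Equiv.prodAssoc m n p)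
        ((-(1/2 : ℂ)) •
          (((f ⊗ₖ (1 : Matrix n n ℂ) + (1 : Matrix m m ℂ) ⊗ₖ g)
            * (f ⊗ₖ (1 : Matrix n n ℂ) + (1 : Matrix m m ℂ) ⊗ₖ g)) ⊗ₖ h)))
      = (0:ℂ) • P + (1/2 : ℂ) • Q + (1/2 : ℂ) • R + (1:ℂ) • S := by
    rw [hsq]
    simp only [Matrix.reindex_apply, Matrix.add_kronecker, Matrix.submatrix_smul,
      Matrix.submatrix_add, Pi.add_apply, Pi.smul_apply, Matrix.kronecker_assoc',
      ← hPdef, ← hQdef, ← hRdef, ← hSdef]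
    module
  have hA4 : Matrix.reindex (Equiv.prodAssoc m n p) (Equiv.prodAssoc m n p)
        ((-((-(1/2 : ℂ)) • ((f * f) ⊗ₖ g))) ⊗ₖ (1 : Matrix p p ℂ))
      = (1/2 : ℂ) • P + (0:ℂ) • Q + (0:ℂ) • R + (0:ℂ) • S := by
    simp only [Matrix.reindex_apply, neg_smul, neg_neg, Matrix.smul_kronecker,
      Matrix.submatrix_smul, Pi.smul_apply, Matrix.kronecker_assoc', ← hPdef]
    module
  rw [hA1, hA2, hA3, hA4]
  have h12 := commute_combo hPQ hPR hPS hQR hQS hRS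
    0 0 (-(1/2 : ℂ)) 0 (-(1/2 : ℂ)) (-(1/2 : ℂ)) 0 0
  have h3l := commute_combo hPQ hPR hPS hQR hQS hRS 0 0 (-(1/2 : ℂ)) 0 0 (1/2) (1/2) 1
  have h3r := commute_combo hPQ hPR hPS hQR hQS hRS (-(1/2 : ℂ)) (-(1/2 : ℂ)) 0 0 0 (1/2) (1/2) 1
  have h4a := commute_combo hPQ hPR hPS hQR hQS hRS 0 0 (-(1/2 : ℂ)) 0 (1/2) 0 0 0
  have h4b := commute_combo hPQ hPR hPS hQR hQS hRS (-(1/2 : ℂ)) (-(1/2 : ℂ)) 0 0 (1/2) 0 0 0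
  have h4c := commute_combo hPQ hPR hPS hQR hQS hRS 0 (1/2) (1/2) 1 (1/2) 0 0 0
  rw [← Matrix.exp_add_of_commute _ _ h12,
    ← Matrix.exp_add_of_commute _ _ (h3l.add_left h3r),
    ← Matrix.exp_add_of_commute _ _ ((h4a.add_left h4b).add_left h4c)]
  congr 1
  module
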